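/- Let (X,d) be a metric space, μ a Borel measure on X, and o ∈ X. Assume that μ(B(o,r)) < ∞ for every r > 0, that the function r ↦ μ(B(o,r)) is locally Lipschitz continuous on (0,∞), and that μ({o}) = 0. Let φ : (0,∞) → [0,∞) be continuous and monotone (non-increasing or non-decreasing), and let f : X → [0,∞) be μ-measurable and bounded on bounded subsets of X. Then for every R > 0, ∫_{X∖B(o,R)} φ(d(o,z)) f(z) dμ(z) = ∫_R^∞ φ(r) |f|_{∂B(o,r)} dr, as an equality of values in [0,∞]. -/

import Mathlib

open MeasureTheory Metric Filter Set
open scoped ENNReal NNReal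

/-! ### Auxiliary lemmas -/

/-- A function continuous on `Ioi 0`, truncated to `0` outside, is measurable. -/
lemma aux_meas_trunc {φ : ℝ → ℝ} (hφ : ContinuousOn φ (Ioi (0:ℝ))) :
    Measurable (fun r : ℝ => if 0 < r then φ r else 0) := by
  apply measurable_of_isOpen
  intro t ht
  have h1 : MeasurableSet (Ioi (0:ℝ) ∩ φ ⁻¹' t) :=
    (hφ.isOpen_inter_preimage isOpen_Ioi ht).measurableSet
  by_cases h0 : (0:ℝ) ∈ t
  · have key : (fun r : ℝ => if 0 < r then φ r else 0) ⁻¹' t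
        = (Ioi (0:ℝ) ∩ φ ⁻¹' t) ∪ Iic (0:ℝ) := by
      ext r; by_cases hr : 0 < r <;> simp [hr, h0, le_of_not_gt, not_le.2]
    rw [key]; exact h1.union measurableSet_Iic
  · have key : (fun r : ℝ => if 0 < r then φ r else 0) ⁻¹' t
        = (Ioi (0:ℝ) ∩ φ ⁻¹' t) := by
      ext r; by_cases hr : 0 < r <;> simp [hr, h0, le_of_not_gt, not_le.2]
    rw [key]; exact h1

/-- Helper: build a Stieltjes function from a monotone continuous function. -/
noncomputable def auxStieltjes (f : ℝ → ℝ) (hm : Monotone f) (hc : Continuous f) :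
    StieltjesFunction ℝ :=
  ⟨f, hm, fun _ => (hc.continuousAt).continuousWithinAt⟩

/-- On an interval where a Stieltjes function is Lipschitz, its measure is null on
Lebesgue-null subsets. -/
lemma aux_stieltjes_null_on (H : StieltjesFunction ℝ) {a b : ℝ} {L : NNReal}
    (hl : LipschitzOnWith L H (Icc a b)) {s : Set ℝ} (hs : s ⊆ Ioc a b)
    (hvol : volume s = 0) : H.measure s = 0 := by
  -- reduce to measurable s
  obtain ⟨s', hss', hs'm, hs'vol⟩ := exists_measurable_superset_of_null hvol
  have hsub : s ⊆ s' ∩ Ioc a b := subset_inter hss' hs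
  refine measure_mono_null hsub ?_
  set t : Set ℝ := s' ∩ Ioc a b with ht_def
  have htm : MeasurableSet t := hs'm.inter measurableSet_Ioc
  have htsub : t ⊆ Ioc a b := inter_subset_right
  have htvol : volume t = 0 := measure_mono_null inter_subset_left hs'vol
  rcases le_or_gt b a with hba | hab
  · have : t ⊆ (∅ : Set ℝ) := by rw [← Ioc_eq_empty (not_lt.2 hba)]; exact htsub
    exact measure_mono_null this (measure_empty)
  -- clamp function
  set c : ℝ → ℝ := fun x => max a (min x b) with hc_def
  have hcmono : Monotone c := fun x y hxy =>
    max_le_max le_rfl (min_le_min hxy le_rfl)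
  have hcmem : ∀ x, c x ∈ Icc a b := fun x =>
    ⟨le_max_left _ _, max_le hab.le (min_le_right _ _)⟩
  have hclip : LipschitzWith 1 c := by
    simpa using (LipschitzWith.id.min_const b).const_max a
  have hccont : Continuous c := hclip.continuous
  have hcfix : ∀ x ∈ Icc a b, c x = x := fun x hx => by
    simp [hc_def, min_eq_left hx.2, max_eq_right hx.1]
  have hHc_cont : Continuous (fun x => H (c x)) :=
    hl.continuousOn.comp_continuous hccont hcmem
  have hkey : ∀ x y : ℝ, x ≤ y → H (c y) - H (c x) ≤ (L : ℝ) * (c y - c x) := by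
    intro x y hxy
    have := hl.dist_le_mul (c y) (hcmem y) (c x) (hcmem x)
    rw [Real.dist_eq, Real.dist_eq] at this
    have hcc : c x ≤ c y := hcmono hxy
    calc H (c y) - H (c x) ≤ |H (c y) - H (c x)| := le_abs_self _
      _ ≤ (L : ℝ) * |c y - c x| := this
      _ = (L : ℝ) * (c y - c x) := by rw [abs_of_nonneg (by linarith)]
  have hckey : ∀ x y : ℝ, x ≤ y → c y - c x ≤ y - x := by
    intro x y hxy
    have := hclip.dist_le_mul x y
    rw [Real.dist_eq, Real.dist_eq] at this
    have hcc : c x ≤ c y := hcmono hxy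
    have : |c x - c y| ≤ |x - y| := by simpa using this
    rw [abs_sub_comm, abs_of_nonneg (by linarith), abs_sub_comm,
      abs_of_nonneg (by linarith)] at this
    linarith
  -- Stieltjes functions
  set Hc : StieltjesFunction ℝ := auxStieltjes (fun x => H (c x)) (H.mono.comp hcmono) hHc_cont
  set G : StieltjesFunction ℝ := auxStieltjes (fun x => (L : ℝ) * c x - H (c x))
    (fun x y hxy => by have := hkey x y hxy; simp only; linarith)
    ((continuous_const.mul hccont).sub hHc_cont)
  set V : StieltjesFunction ℝ := auxStieltjes (fun x => (L : ℝ) * x - (L : ℝ) * c x)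
    (fun x y hxy => by
      have := hckey x y hxy
      have hL : (0:ℝ) ≤ L := L.coe_nonneg
      simp only; nlinarith)
    ((continuous_const.mul continuous_id).sub (continuous_const.mul hccont))
  set lin : StieltjesFunction ℝ := auxStieltjes (fun x => (L : ℝ) * x)
    (fun x y hxy => by have hL : (0:ℝ) ≤ L := L.coe_nonneg; simp only; nlinarith)
    (continuous_const.mul continuous_id)
  -- sum identity
  have hsum : Hc.measure + (G.measure + V.measure) = lin.measure := by
    have hloc : IsLocallyFiniteMeasure (Hc.measure + (G.measure + V.measure)) := by
      constructor
      intro x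
      refine ⟨Ioc (x-1) (x+1), Ioc_mem_nhds (by linarith) (by linarith), ?_⟩
      simp only [Measure.add_apply, Hc.measure_Ioc, G.measure_Ioc, V.measure_Ioc]
      exact ENNReal.add_lt_top.2 ⟨ENNReal.ofReal_lt_top,
        ENNReal.add_lt_top.2 ⟨ENNReal.ofReal_lt_top, ENNReal.ofReal_lt_top⟩⟩
    refine MeasureTheory.Measure.ext_of_Ioc _ _ (fun x y hxy => ?_)
    simp only [Measure.add_apply, Hc.measure_Ioc, G.measure_Ioc, V.measure_Ioc,
      lin.measure_Ioc]
    have e1 : Hc y - Hc x = H (c y) - H (c x) := rfl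
    have e2 : G y - G x = ((L : ℝ) * c y - H (c y)) - ((L : ℝ) * c x - H (c x)) := rfl
    have e3 : V y - V x = ((L : ℝ) * y - (L : ℝ) * c y) - ((L : ℝ) * x - (L : ℝ) * c x) := rfl
    have e4 : lin y - lin x = (L : ℝ) * y - (L : ℝ) * x := rfl
    rw [e1, e2, e3, e4]
    have n1 : (0:ℝ) ≤ H (c y) - H (c x) := by
      have := H.mono (hcmono hxy.le); linarith
    have n2 : (0:ℝ) ≤ ((L : ℝ) * c y - H (c y)) - ((L : ℝ) * c x - H (c x)) := by
      have := hkey x y hxy.le; linarith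
    have n3 : (0:ℝ) ≤ ((L : ℝ) * y - (L : ℝ) * c y) - ((L : ℝ) * x - (L : ℝ) * c x) := by
      have := hckey x y hxy.le
      have hL : (0:ℝ) ≤ L := L.coe_nonneg
      nlinarith
    rw [← ENNReal.ofReal_add n2 n3, ← ENNReal.ofReal_add n1 (by linarith)]
    ring_nf
  -- lin measure is L • volume
  have hlin : lin.measure = (ENNReal.ofReal (L : ℝ)) • volume := by
    refine MeasureTheory.Measure.ext_of_Ioc _ _ (fun x y hxy => ?_)
    rw [lin.measure_Ioc]
    have e4 : lin y - lin x = (L : ℝ) * (y - x) := by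
      show (L : ℝ) * y - (L : ℝ) * x = _; ring
    rw [e4, ENNReal.ofReal_mul L.coe_nonneg, Measure.smul_apply, smul_eq_mul,
      Real.volume_Ioc]
  -- Hc.measure t = 0
  have hHct : Hc.measure t = 0 := by
    have h1 : Hc.measure t ≤ lin.measure t := by
      rw [← hsum]
      simp only [Measure.add_apply]
      exact le_self_add
    rw [hlin] at h1
    simp only [Measure.smul_apply, smul_eq_mul, htvol, mul_zero] at h1
    exact le_antisymm h1 zero_le
  -- H.measure and Hc.measure agree on subsets of Ioc a b
  have hrestr : H.measure.restrict (Ioc a b) = Hc.measure.restrict (Ioc a b) := by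
    have f1 : IsFiniteMeasure (H.measure.restrict (Ioc a b)) := by
      constructor
      rw [Measure.restrict_apply MeasurableSet.univ, univ_inter, H.measure_Ioc]
      exact ENNReal.ofReal_lt_top
    refine MeasureTheory.Measure.ext_of_Ioc_finite _ _ ?_ (fun x y hxy => ?_)
    · rw [Measure.restrict_apply MeasurableSet.univ, univ_inter,
        Measure.restrict_apply MeasurableSet.univ, univ_inter, H.measure_Ioc,
        Hc.measure_Ioc]
      have : Hc b - Hc a = H (c b) - H (c a) := rfl
      rw [this, hcfix a ⟨le_rfl, hab.le⟩, hcfix b ⟨hab.le, le_rfl⟩]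
    · rw [Measure.restrict_apply measurableSet_Ioc,
        Measure.restrict_apply measurableSet_Ioc, Ioc_inter_Ioc,
        H.measure_Ioc, Hc.measure_Ioc]
      rcases le_or_gt (x ⊔ a) (y ⊓ b) with hle | hlt
      · have hm1 : x ⊔ a ∈ Icc a b := ⟨le_max_right _ _, hle.trans (min_le_right _ _)⟩
        have hm2 : y ⊓ b ∈ Icc a b := ⟨le_trans (le_max_right _ _) hle, min_le_right _ _⟩
        have : Hc (y ⊓ b) - Hc (x ⊔ a) = H (c (y ⊓ b)) - H (c (x ⊔ a)) := rfl
        rw [this, hcfix _ hm1, hcfix _ hm2]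
      · rw [ENNReal.ofReal_eq_zero.2 (sub_nonpos.2 (H.mono hlt.le)),
          ENNReal.ofReal_eq_zero.2 (sub_nonpos.2 (Hc.mono hlt.le))]
  calc H.measure t = H.measure.restrict (Ioc a b) t := by
        rw [Measure.restrict_apply htm, inter_eq_self_of_subset_left htsub]
    _ = Hc.measure.restrict (Ioc a b) t := by rw [hrestr]
    _ = Hc.measure t := by rw [Measure.restrict_apply htm, inter_eq_self_of_subset_left htsub]
    _ = 0 := hHct

/-- A Stieltjes function vanishing on `Iic 0` and locally Lipschitz on `Ioi 0` has
measure absolutely continuous w.r.t. Lebesgue. -/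
lemma aux_stieltjes_ac (H : StieltjesFunction ℝ) (h0 : ∀ x : ℝ, x ≤ 0 → H x = 0)
    (hloc : ∀ x : ℝ, 0 < x → ∃ ε : ℝ, 0 < ε ∧ ∃ L : NNReal,
      LipschitzOnWith L H (Icc (x - ε) (x + ε))) :
    H.measure ≪ volume := by
  intro s hs
  obtain ⟨s', hss', hs'm, hs'vol⟩ := exists_measurable_superset_of_null hs
  refine measure_mono_null hss' ?_
  have hIic : H.measure (Iic 0) = 0 := by
    have htd : Tendsto H atBot (nhds 0) := by
      apply Tendsto.congr' _ (tendsto_const_nhds (α := ℝ))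
      filter_upwards [eventually_le_atBot (0:ℝ)] with x hx
      exact (h0 x hx).symm
    rw [H.measure_Iic htd 0, h0 0 le_rfl]
    simp
  choose! ε hεpos L hLip using hloc
  have hT : ∀ x ∈ Ioi (0:ℝ), Ioc (x - ε x) (x + ε x) ∈ nhdsWithin x (Ioi 0) :=
    fun x hx => nhdsWithin_le_nhds
      (Ioc_mem_nhds (by linarith [hεpos x hx]) (by linarith [hεpos x hx]))
  obtain ⟨u, hu_sub, hu_cnt, hu_cov⟩ := TopologicalSpace.countable_cover_nhdsWithin hT
  have hpos : H.measure (s' ∩ Ioi 0) = 0 := by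
    have hsub : s' ∩ Ioi 0 ⊆ ⋃ x ∈ u, s' ∩ Ioc (x - ε x) (x + ε x) := by
      intro y hy
      have := hu_cov hy.2
      simp only [mem_iUnion] at this ⊢
      obtain ⟨x, hx, hyx⟩ := this
      exact ⟨x, hx, hy.1, hyx⟩
    refine measure_mono_null hsub ((measure_biUnion_null_iff hu_cnt).2 fun x hx => ?_)
    exact aux_stieltjes_null_on H (hLip x (hu_sub hx)) inter_subset_right
      (measure_mono_null inter_subset_left hs'vol)
  have : s' = (s' ∩ Iic 0) ∪ (s' ∩ Ioi 0) := by
    rw [← inter_union_distrib_left, Iic_union_Ioi, inter_univ]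
  rw [this]
  exact measure_union_null (measure_mono_null inter_subset_right hIic) hpos

/-- The boundary integral of `f` on `∂B(o,r)`:
`|f|_{∂B(o,r)} = limsup_{δ→0⁺} (1/δ) ∫_{B(o,r+δ)∖B(o,r)} f dμ`. -/
noncomputable def bdryIntegral {X : Type*} [MetricSpace X] [MeasurableSpace X]
    (μ : Measure X) (f : X → ℝ) (o : X) (r : ℝ) : ℝ :=
  limsup (fun δ : ℝ => (∫ z in ball o (r + δ) \ ball o r, f z ∂μ) / δ)
    (nhdsWithin 0 (Ioi 0))

theorem stmt_7 {X : Type*} [MetricSpace X] [MeasurableSpace X] [BorelSpace X]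
    (μ : Measure X) (o : X)
    (hfin : ∀ r : ℝ, 0 < r → μ (ball o r) < ⊤)
    (hLip : ∀ a : ℝ, 0 < a → ∃ (K : NNReal) (t : Set ℝ), t ∈ nhdsWithin a (Ioi 0) ∧
      LipschitzOnWith K (fun r : ℝ => (μ (ball o r)).toReal) t)
    (hpt : μ {o} = 0)
    (φ : ℝ → ℝ) (hφc : ContinuousOn φ (Ioi 0)) (hφ0 : ∀ r : ℝ, 0 < r → 0 ≤ φ r)
    (hφmono : MonotoneOn φ (Ioi 0) ∨ AntitoneOn φ (Ioi 0))
    (f : X → ℝ) (hf : Measurable f) (hf0 : ∀ z, 0 ≤ f z)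
    (hbd : ∀ s : Set X, Bornology.IsBounded s → ∃ C : ℝ, ∀ z ∈ s, |f z| ≤ C) :
    ∀ R : ℝ, 0 < R →
      ∫⁻ z in (ball o R)ᶜ, ENNReal.ofReal (φ (dist o z) * f z) ∂μ
        = ∫⁻ r in Ioi R, ENNReal.ofReal (φ r * bdryIntegral μ f o r) := by
  intro R hR
  -- the cumulative mass function
  obtain ⟨F, hF_def⟩ : ∃ F : ℝ → ℝ, ∀ r, F r = (μ (ball o r)).toReal :=
    ⟨_, fun _ => rfl⟩
  -- bounds for f on balls
  have hCb : ∀ b : ℝ, ∃ C : ℝ, 0 ≤ C ∧ ∀ z ∈ ball o b, |f z| ≤ C := by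
    intro b
    obtain ⟨C, hC⟩ := hbd (ball o b) isBounded_ball
    exact ⟨max C 0, le_max_right _ _, fun z hz => (hC z hz).trans (le_max_left _ _)⟩
  choose Cb hCb0 hCbB using hCb
  -- integrability on balls
  have hint : ∀ r : ℝ, IntegrableOn f (ball o r) μ := by
    intro r
    rcases le_or_gt r 0 with hr | hr
    · rw [ball_eq_empty.2 hr]; exact integrableOn_empty
    · exact Measure.integrableOn_of_bounded (hfin r hr).ne hf.aestronglyMeasurable
        ((ae_restrict_iff' measurableSet_ball).2 (ae_of_all _ fun z hz => by
          simpa [Real.norm_eq_abs] using hCbB r z hz))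
  -- h : cumulative integral
  obtain ⟨h, hh_def⟩ : ∃ h : ℝ → ℝ, ∀ r, h r = ∫ z in ball o r, f z ∂μ :=
    ⟨_, fun _ => rfl⟩
  have hzero : ∀ r : ℝ, r ≤ 0 → h r = 0 := by
    intro r hr; rw [hh_def]; simp [ball_eq_empty.2 hr]
  have hmono : Monotone h := by
    intro s t hst
    rw [hh_def, hh_def]
    exact setIntegral_mono_set (hint t) (ae_of_all _ hf0)
      (HasSubset.Subset.eventuallyLE (ball_subset_ball hst))
  have hdiff : ∀ s t : ℝ, s ≤ t →
      (∫ z in ball o t \ ball o s, f z ∂μ) = h t - h s := by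
    intro s t hst
    rw [hh_def, hh_def]
    exact integral_diff measurableSet_ball (hint t) (ball_subset_ball hst) (f := f)
  -- annulus bound
  have hannb : ∀ b s t : ℝ, s ≤ t → t ≤ b → 0 < t → h t - h s ≤ Cb b * (F t - F s) := by
    intro b s t hst htb ht
    have hsub : ball o s ⊆ ball o t := ball_subset_ball hst
    have hfint : μ (ball o t) ≠ ⊤ := (hfin t ht).ne
    have hfins : μ (ball o s) ≠ ⊤ := (lt_of_le_of_lt (measure_mono hsub) (hfin t ht)).ne
    have hann : μ (ball o t \ ball o s) = μ (ball o t) - μ (ball o s) :=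
      measure_diff hsub measurableSet_ball.nullMeasurableSet hfins
    have hannR : (μ (ball o t \ ball o s)).toReal = F t - F s := by
      rw [hann, ENNReal.toReal_sub_of_le (measure_mono hsub) hfint, hF_def, hF_def]
    have hbound : ∀ z ∈ ball o t \ ball o s, ‖f z‖ ≤ Cb b := by
      intro z hz
      rw [Real.norm_eq_abs]
      exact hCbB b z (ball_subset_ball htb hz.1)
    have hfinann : μ (ball o t \ ball o s) < ⊤ :=
      lt_of_le_of_lt (measure_mono diff_subset) (hfin t ht)
    calc h t - h s = ∫ z in ball o t \ ball o s, f z ∂μ := (hdiff s t hst).symm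
      _ ≤ ‖∫ z in ball o t \ ball o s, f z ∂μ‖ := Real.le_norm_self _
      _ ≤ Cb b * (μ (ball o t \ ball o s)).toReal :=
          norm_setIntegral_le_of_norm_le_const hfinann hbound
      _ = Cb b * (F t - F s) := by rw [hannR]
  -- F local Lipschitz control
  have hFc : ∀ x : ℝ, 0 < x → ∃ ε : ℝ, 0 < ε ∧ ε < x ∧ ∃ K : NNReal,
      ∀ y ∈ Icc (x - ε) (x + ε), ∀ z ∈ Icc (x - ε) (x + ε), |F y - F z| ≤ K * |y - z| := by
    intro x hx
    obtain ⟨K, t, ht, hK⟩ := hLip x hx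
    rw [nhdsWithin_eq_nhds.2 (Ioi_mem_nhds hx)] at ht
    obtain ⟨δ, hδ, hball⟩ := Metric.mem_nhds_iff.1 ht
    refine ⟨min (δ/2) (x/2), by positivity,
      lt_of_le_of_lt (min_le_right _ _) (by linarith), K, fun y hy z hz => ?_⟩
    have hmem : ∀ w ∈ Icc (x - min (δ/2) (x/2)) (x + min (δ/2) (x/2)), w ∈ t := by
      intro w hw
      apply hball
      rw [mem_ball, Real.dist_eq, abs_lt]
      have h1 := hw.1; have h2 := hw.2
      have h3 := min_le_left (δ/2) (x/2)
      constructor <;> linarith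
    have := hK.dist_le_mul y (hmem y hy) z (hmem z hz)
    rw [Real.dist_eq, Real.dist_eq] at this
    rw [hF_def, hF_def]
    exact this
  -- h local Lipschitz
  have hLocLip : ∀ x : ℝ, 0 < x → ∃ ε : ℝ, 0 < ε ∧ ε < x ∧ ∃ L : NNReal,
      LipschitzOnWith L h (Icc (x - ε) (x + ε)) := by
    intro x hx
    obtain ⟨ε, hε, hεx, K, hK⟩ := hFc x hx
    refine ⟨ε, hε, hεx, (Cb (x + ε)).toNNReal * K, LipschitzOnWith.of_dist_le_mul ?_⟩
    have key : ∀ y ∈ Icc (x - ε) (x + ε), ∀ z ∈ Icc (x - ε) (x + ε), z ≤ y →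
        h y - h z ≤ Cb (x + ε) * (K * (y - z)) := by
      intro y hy z hz hzy
      have hy0 : 0 < y := lt_of_lt_of_le (by linarith) hy.1
      have h1 : h y - h z ≤ Cb (x + ε) * (F y - F z) := hannb (x + ε) z y hzy hy.2 hy0
      have h2 : F y - F z ≤ K * (y - z) := by
        have h2' := hK y hy z hz
        have habs : |y - z| = y - z := abs_of_nonneg (by linarith)
        rw [habs] at h2'
        exact le_trans (le_abs_self _) h2'
      nlinarith [hCb0 (x + ε)]
    intro y hy z hz
    rw [Real.dist_eq, Real.dist_eq]
    have hcoe : (((Cb (x + ε)).toNNReal * K : NNReal) : ℝ) = Cb (x + ε) * K := by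
      rw [NNReal.coe_mul, Real.coe_toNNReal _ (hCb0 (x + ε))]
    rw [hcoe]
    rcases le_total z y with hzy | hyz
    · rw [abs_of_nonneg (by linarith [hmono hzy]), abs_of_nonneg (by linarith)]
      have := key y hy z hz hzy; nlinarith
    · rw [abs_of_nonpos (by linarith [hmono hyz]), abs_of_nonpos (by linarith)]
      have := key z hz y hy hyz; nlinarith
  -- spheres are null
  have hSphere : ∀ r : ℝ, 0 < r → μ (sphere o r) = 0 := by
    intro r hr
    obtain ⟨ε, hε, hεx, K, hK⟩ := hFc r hr
    have hfins : μ (sphere o r) < ⊤ := by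
      refine lt_of_le_of_lt (measure_mono ?_) (hfin (r + 1) (by linarith))
      exact fun z hz => by rw [mem_sphere] at hz; rw [mem_ball, hz]; linarith
    set a : ℝ := (μ (sphere o r)).toReal with ha_def
    have ha0 : 0 ≤ a := ENNReal.toReal_nonneg
    have key : ∀ δ : ℝ, 0 < δ → δ ≤ ε → a ≤ K * δ := by
      intro δ hδ hδε
      have hsub : sphere o r ∪ ball o r ⊆ ball o (r + δ) := by
        rw [union_comm, ball_union_sphere]
        exact closedBall_subset_ball (by linarith)
      have hdisj : Disjoint (sphere o r) (ball o r) := by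
        rw [Set.disjoint_left]
        intro z hz hz'
        rw [mem_sphere] at hz; rw [mem_ball, hz] at hz'; exact absurd hz' (lt_irrefl r)
      have hunion : μ (sphere o r) + μ (ball o r) ≤ μ (ball o (r + δ)) := by
        rw [← measure_union hdisj measurableSet_ball]
        exact measure_mono hsub
      have hfin1 : μ (ball o (r + δ)) < ⊤ := hfin _ (by linarith)
      have hfin2 : μ (ball o r) < ⊤ := hfin _ hr
      have htr : a + F r ≤ F (r + δ) := by
        rw [hF_def, hF_def]
        calc a + (μ (ball o r)).toReal = (μ (sphere o r) + μ (ball o r)).toReal := by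
              rw [ENNReal.toReal_add hfins.ne hfin2.ne]
          _ ≤ (μ (ball o (r + δ))).toReal := ENNReal.toReal_mono hfin1.ne hunion
      have hFd : F (r + δ) - F r ≤ K * δ := by
        have := hK (r + δ) ⟨by linarith, by linarith⟩ r ⟨by linarith, by linarith⟩
        rw [show r + δ - r = δ by ring, abs_of_pos hδ] at this
        exact le_trans (le_abs_self _) this
      linarith
    have ha : a ≤ 0 := by
      by_contra hcon
      push_neg at hcon
      have hδpos : 0 < min ε (a / (2 * ((K:ℝ) + 1))) := by positivity
      have h1 := key _ hδpos (min_le_left _ _)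
      have h2 : (K : ℝ) * min ε (a / (2 * ((K:ℝ) + 1)))
          ≤ K * (a / (2 * ((K:ℝ) + 1))) :=
        mul_le_mul_of_nonneg_left (min_le_right _ _) K.coe_nonneg
      have h3 : (K : ℝ) * (a / (2 * ((K:ℝ) + 1))) < a := by
        rw [mul_div_assoc', div_lt_iff₀ (by positivity)]
        nlinarith [K.coe_nonneg]
      linarith
    have haz : a = 0 := le_antisymm ha ha0
    rw [ha_def] at haz
    exact (ENNReal.toReal_eq_zero_iff _).1 haz |>.resolve_right hfins.ne
  -- right continuity
  have hrc : ∀ x : ℝ, ContinuousWithinAt h (Ici x) x := by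
    intro x
    rw [Metric.continuousWithinAt_iff]
    intro η hη
    rcases lt_trichotomy x 0 with hx | hx | hx
    · refine ⟨-x, by linarith, fun y hy hyx => ?_⟩
      rw [mem_Ici] at hy
      rw [Real.dist_eq, abs_of_nonneg (by linarith)] at hyx
      rw [hzero y (by linarith), hzero x hx.le, dist_self]
      exact hη
    · subst hx
      have hInter : ⋂ n : ℕ, ball o (1 / (n + 1)) = {o} := by
        ext z
        simp only [mem_iInter, mem_ball, mem_singleton_iff]
        constructor
        · intro hz
          by_contra hne
          have hd : 0 < dist z o := dist_pos.2 hne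
          obtain ⟨n, hn⟩ := exists_nat_one_div_lt hd
          exact absurd (hz n) (not_lt.2 hn.le)
        · intro hz n
          rw [hz, dist_self]
          positivity
      have htend : Tendsto (fun n : ℕ => μ (ball o (1 / (n + 1)))) atTop (nhds 0) := by
        have := tendsto_measure_iInter_atTop (μ := μ)
          (s := fun n : ℕ => ball o (1 / (n + 1)))
          (fun n => measurableSet_ball.nullMeasurableSet)
          (fun i j hij => ball_subset_ball (by
            apply div_le_div_of_nonneg_left (by norm_num) (by positivity)
            exact_mod_cast by exact_mod_cast Nat.add_le_add_right hij 1))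
          ⟨0, (hfin _ (by norm_num)).ne⟩
        rw [hInter, hpt] at this
        exact this
      set c : ℝ := η / (Cb 1 + 1) with hc_def
      have hc : 0 < c := div_pos hη (by linarith [hCb0 1])
      have hev : ∀ᶠ n : ℕ in atTop, μ (ball o (1 / (n + 1))) < ENNReal.ofReal c :=
        htend.eventually (gt_mem_nhds (by simp [ENNReal.ofReal_pos.2 hc]))
      obtain ⟨n, hn⟩ := hev.exists
      refine ⟨min (1 / (n + 1)) 1, by positivity, fun y hy hyx => ?_⟩
      rw [mem_Ici] at hy
      rw [Real.dist_eq, abs_of_nonneg (by linarith)] at hyx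
      rw [Real.dist_eq, hzero 0 le_rfl, sub_zero]
      rcases eq_or_lt_of_le hy with rfl | hy0
      · rw [hzero 0 le_rfl, abs_zero]; exact hη
      · have hF1 : h y - h 0 ≤ Cb 1 * (F y - F 0) :=
          hannb 1 0 y hy0.le (by
            have := min_le_right (1 / (n + 1 : ℝ)) 1; linarith) hy0
        have hF0 : F 0 = 0 := by
          rw [hF_def]; simp [ball_eq_empty.2 le_rfl]
        have hFy : F y ≤ c := by
          rw [hF_def]
          have hle : μ (ball o y) ≤ μ (ball o (1 / (n + 1))) := by
            apply measure_mono
            apply ball_subset_ball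
            have := min_le_left (1 / (n + 1 : ℝ)) 1; linarith
          exact ENNReal.toReal_le_of_le_ofReal hc.le (le_trans hle hn.le)
        rw [hzero 0 le_rfl, sub_zero] at hF1
        have hhy0 : 0 ≤ h y := by
          have := hmono hy0.le; rw [hzero 0 le_rfl] at this; linarith
        rw [abs_of_nonneg hhy0]
        have hyc : h y ≤ Cb 1 * c := by nlinarith [hCb0 1]
        have hlt : Cb 1 * c < η := by
          rw [hc_def, mul_div_assoc', div_lt_iff₀ (by linarith [hCb0 1])]
          nlinarith [hCb0 1]
        linarith
    · obtain ⟨ε, hε, hεx, L, hL⟩ := hLocLip x hx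
      refine ⟨min ε (η / ((L:ℝ) + 1)), by positivity, fun y hy hyx => ?_⟩
      rw [mem_Ici] at hy
      rw [Real.dist_eq, abs_of_nonneg (by linarith)] at hyx
      have hy1 : y ∈ Icc (x - ε) (x + ε) := by
        constructor
        · linarith
        · have := min_le_left ε (η / ((L:ℝ) + 1)); linarith
      have hx1 : x ∈ Icc (x - ε) (x + ε) := ⟨by linarith, by linarith⟩
      have := hL.dist_le_mul y hy1 x hx1
      rw [Real.dist_eq] at this
      calc dist (h y) (h x) ≤ (L:ℝ) * |y - x| := this
        _ ≤ (L:ℝ) * (η / ((L:ℝ) + 1)) := by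
            apply mul_le_mul_of_nonneg_left _ L.coe_nonneg
            rw [abs_of_nonneg (by linarith)]
            have := min_le_right ε (η / ((L:ℝ) + 1)); linarith
        _ < η := by
            rw [mul_div_assoc', div_lt_iff₀ (by positivity)]
            nlinarith [L.coe_nonneg]
  set H : StieltjesFunction ℝ := ⟨h, hmono, hrc⟩ with hH_def
  have hHeq : (H : ℝ → ℝ) = h := rfl
  have hHapp : ∀ x, H x = h x := fun _ => rfl
  have hAC : H.measure ≪ volume := by
    refine aux_stieltjes_ac H (fun x hx => hzero x hx) (fun x hx => ?_)
    obtain ⟨ε, hε, -, L, hL⟩ := hLocLip x hx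
    exact ⟨ε, hε, L, hL⟩
  -- truncated φ
  set φt : ℝ → ℝ := fun r => if 0 < r then φ r else 0 with hφt_def
  have hφt_meas : Measurable φt := aux_meas_trunc hφc
  have hφt_eq : ∀ r : ℝ, 0 < r → φt r = φ r := fun r hr => if_pos hr
  -- the pushforward measure
  have hdist_meas : Measurable (fun z : X => dist o z) :=
    (continuous_const.dist continuous_id).measurable
  -- m = H.measure
  have hm_eq : (μ.withDensity (fun z => ENNReal.ofReal (f z))).map (fun z => dist o z)
      = H.measure := by
    set μ' : Measure X := μ.withDensity (fun z => ENNReal.ofReal (f z)) with hμ'_def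
    set m : Measure ℝ := μ'.map (fun z => dist o z) with hm_def
    have hμ'null : ∀ s : Set X, μ s = 0 → μ' s = 0 :=
      fun s hs => withDensity_absolutelyContinuous μ _ hs
    have hμ'ball : ∀ b : ℝ, μ' (ball o b) < ⊤ := by
      intro b
      rcases le_or_gt b 0 with hb | hb
      · rw [ball_eq_empty.2 hb]; simp
      · rw [hμ'_def, withDensity_apply _ measurableSet_ball]
        calc ∫⁻ z in ball o b, ENNReal.ofReal (f z) ∂μ
            ≤ ∫⁻ _ in ball o b, ENNReal.ofReal (Cb b) ∂μ := by
              refine setLIntegral_mono measurable_const (fun z hz => ?_)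
              exact ENNReal.ofReal_le_ofReal (le_trans (le_abs_self _) (hCbB b z hz))
          _ = ENNReal.ofReal (Cb b) * μ (ball o b) := setLIntegral_const _ _
          _ < ⊤ := ENNReal.mul_lt_top ENNReal.ofReal_lt_top (hfin b hb)
    have hμ'sph : ∀ r : ℝ, μ' (sphere o r) = 0 := by
      intro r
      rcases lt_trichotomy r 0 with hr | hr | hr
      · have hemp : sphere o r = ∅ := by
          ext z
          simp only [mem_sphere, mem_empty_iff_false, iff_false]
          intro hz
          have hd : (0:ℝ) ≤ dist z o := dist_nonneg
          rw [hz] at hd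
          linarith
        rw [hemp]; simp
      · refine measure_mono_null (fun z hz => ?_) (hμ'null _ hpt)
        rw [mem_sphere] at hz
        rw [hr] at hz
        simp [dist_eq_zero.1 hz]
      · exact hμ'null _ (hSphere r hr)
    have hmIoc : ∀ a b : ℝ, m (Ioc a b) < ⊤ := by
      intro a b
      rw [hm_def, Measure.map_apply hdist_meas measurableSet_Ioc]
      refine lt_of_le_of_lt (measure_mono (fun z hz => ?_)) (hμ'ball (|b| + 1))
      rw [mem_preimage, mem_Ioc] at hz
      rw [mem_ball, dist_comm]
      calc dist o z ≤ b := hz.2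
        _ ≤ |b| := le_abs_self b
        _ < |b| + 1 := by linarith
    have : IsLocallyFiniteMeasure m := by
      constructor
      intro x
      exact ⟨Ioc (x - 1) (x + 1), Ioc_mem_nhds (by linarith) (by linarith), hmIoc _ _⟩
    refine MeasureTheory.Measure.ext_of_Ioc m H.measure (fun a b hab => ?_)
    rw [hm_def, Measure.map_apply hdist_meas measurableSet_Ioc, H.measure_Ioc, hHapp, hHapp]
    rcases le_or_gt b 0 with hb | hb
    · have h1 : μ' ((fun z => dist o z) ⁻¹' Ioc a b) = 0 := by
        refine measure_mono_null (fun z hz => ?_) (hμ'null _ hpt)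
        rw [mem_preimage, mem_Ioc] at hz
        have hd0 : dist o z = 0 := le_antisymm (hz.2.trans hb) dist_nonneg
        rw [dist_comm] at hd0
        simp [dist_eq_zero.1 hd0]
      rw [h1, hzero b hb, hzero a (by linarith)]
      simp
    · have haeq : (fun z => dist o z) ⁻¹' Ioc a b =ᵐ[μ'] ball o b \ ball o a := by
        have h1 : μ' ((fun z => dist o z) ⁻¹' Ioc a b \ (ball o b \ ball o a)) = 0 := by
          refine measure_mono_null (fun z hz => ?_) (hμ'sph b)
          obtain ⟨hz1, hz2⟩ := hz
          rw [mem_preimage, mem_Ioc] at hz1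
          rw [mem_diff, mem_ball', mem_ball'] at hz2
          push_neg at hz2
          rw [mem_sphere']
          rcases lt_or_ge (dist o z) b with hlt | hge
          · exact absurd hz1.1 (lt_asymm (hz2 hlt))
          · exact le_antisymm hz1.2 hge
        have h2 : μ' ((ball o b \ ball o a) \ (fun z => dist o z) ⁻¹' Ioc a b) = 0 := by
          refine measure_mono_null (fun z hz => ?_) (hμ'sph a)
          obtain ⟨⟨hz1, hz2⟩, hz3⟩ := hz
          rw [mem_ball'] at hz1
          rw [mem_ball'] at hz2
          rw [mem_preimage, mem_Ioc] at hz3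
          push_neg at hz3
          rw [mem_sphere']
          rcases lt_or_ge a (dist o z) with hlt | hge
          · exact absurd hz1 (lt_asymm (hz3 hlt))
          · exact le_antisymm hge (not_lt.1 hz2)
        exact (MeasureTheory.ae_eq_set).2 ⟨h1, h2⟩
      rw [measure_congr haeq, hμ'_def]
      show (μ.withDensity fun z => ENNReal.ofReal (f z)) (ball o b \ ball o a) = _
      rw [withDensity_apply _ (measurableSet_ball.diff measurableSet_ball),
        ← hdiff a b hab.le]
      exact (ofReal_integral_eq_lintegral_ofReal ((hint b).mono_set diff_subset)
        (ae_of_all _ hf0)).symm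
  -- Left side
  have lhs_eq : ∫⁻ z in (ball o R)ᶜ, ENNReal.ofReal (φ (dist o z) * f z) ∂μ
      = ∫⁻ r in Ici R, ENNReal.ofReal (φt r)
          ∂((μ.withDensity (fun z => ENNReal.ofReal (f z))).map (fun z => dist o z)) := by
    have hpre : (fun z : X => dist o z) ⁻¹' Ici R = (ball o R)ᶜ := by
      ext z; simp [mem_ball, dist_comm, not_lt]
    have hg : Measurable (fun z : X => ENNReal.ofReal (f z)) := hf.ennreal_ofReal
    have hh2 : Measurable (fun z : X => ENNReal.ofReal (φt (dist o z))) :=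
      (hφt_meas.comp hdist_meas).ennreal_ofReal
    rw [setLIntegral_map measurableSet_Ici hφt_meas.ennreal_ofReal hdist_meas,
      hpre, restrict_withDensity measurableSet_ball.compl,
      lintegral_withDensity_eq_lintegral_mul _ hg hh2]
    refine setLIntegral_congr_fun measurableSet_ball.compl (fun z hz => ?_)
    have hd : 0 < dist o z := by
      rw [mem_compl_iff, mem_ball, not_lt] at hz
      rw [dist_comm]; linarith
    simp only [Pi.mul_apply]
    rw [hφt_eq _ hd, ENNReal.ofReal_mul (hφ0 _ hd), mul_comm]
  -- Right side
  have rhs_eq : ∫⁻ r in Ici R, ENNReal.ofReal (φt r) ∂(H.measure)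
      = ∫⁻ r in Ioi R, ENNReal.ofReal (φ r * bdryIntegral μ f o r) := by
    have hsing : H.measure {R} = 0 := hAC (by simp)
    have hIciIoi : H.measure.restrict (Ici R) = H.measure.restrict (Ioi R) := by
      refine Measure.restrict_congr_set (ae_eq_set.2 ⟨?_, ?_⟩)
      · rw [Ici_diff_Ioi, Icc_self]; exact hsing
      · rw [diff_eq_empty.2 Ioi_subset_Ici_self]; simp
    rw [hIciIoi]
    set D : ℝ → ℝ≥0∞ := H.measure.rnDeriv volume with hD_def
    have hwd : volume.withDensity D = H.measure :=
      Measure.withDensity_rnDeriv_eq H.measure volume hAC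
    rw [← hwd, restrict_withDensity measurableSet_Ioi,
      lintegral_withDensity_eq_lintegral_mul _ (Measure.measurable_rnDeriv _ _)
        hφt_meas.ennreal_ofReal]
    refine lintegral_congr_ae ?_
    have h1 : ∀ᵐ r ∂(volume.restrict (Ioi R)), HasDerivAt H ((D r).toReal) r :=
      ae_restrict_of_ae H.ae_hasDerivAt
    have h2 : ∀ᵐ r ∂(volume.restrict (Ioi R)), D r < ⊤ :=
      ae_restrict_of_ae (Measure.rnDeriv_lt_top H.measure volume)
    have h3 : ∀ᵐ r ∂(volume.restrict (Ioi R)), r ∈ Ioi R :=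
      ae_restrict_mem measurableSet_Ioi
    filter_upwards [h1, h2, h3] with r hder hlt hrR
    have hr0 : 0 < r := lt_trans hR hrR
    have hbdry : bdryIntegral μ f o r = (D r).toReal := by
      have hda : HasDerivAt h ((D r).toReal) r := by rw [← hHeq]; exact hder
      have hslope := hasDerivAt_iff_tendsto_slope.1 hda
      have he : Tendsto (fun δ : ℝ => r + δ) (nhdsWithin 0 (Ioi 0))
          (nhdsWithin r {r}ᶜ) := by
        apply tendsto_nhdsWithin_of_tendsto_nhds_of_eventually_within
        · have : Tendsto (fun δ : ℝ => r + δ) (nhds 0) (nhds r) := by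
            simpa using (continuous_add_left r).tendsto (0:ℝ)
          exact this.mono_left nhdsWithin_le_nhds
        · filter_upwards [self_mem_nhdsWithin] with δ hδ
          rw [mem_Ioi] at hδ
          simp only [mem_compl_iff, mem_singleton_iff]
          intro hc
          have : δ = 0 := by linarith [congrArg (· - r) hc]
          linarith
      have h4 : Tendsto (fun δ : ℝ => (∫ z in ball o (r + δ) \ ball o r, f z ∂μ) / δ)
          (nhdsWithin 0 (Ioi 0)) (nhds ((D r).toReal)) := by
        apply Tendsto.congr' _ (hslope.comp he)
        filter_upwards [self_mem_nhdsWithin] with δ hδ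
        rw [mem_Ioi] at hδ
        show slope h r (r + δ) = _
        rw [slope_def_field, hdiff r (r + δ) (by linarith),
          show r + δ - r = δ from by ring]
      exact h4.limsup_eq
    show D r * ENNReal.ofReal (φt r) = ENNReal.ofReal (φ r * bdryIntegral μ f o r)
    rw [hbdry, ENNReal.ofReal_mul (hφ0 r hr0), ENNReal.ofReal_toReal hlt.ne,
      hφt_eq r hr0, mul_comm]
  rw [lhs_eq, hm_eq, rhs_eq]
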